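/- Let h ∈ ℕ, let u,v ∈ 𝔖_n with u < v, and let F be an h-flipclass of paths from u to v. Then the following are equivalent: (1) the natural injection i_{TS_F} from F to the set of paths of length h from (u,0) to (v,h) in TS_F is bijective, i.e. every such path in TS_F is effective; (2) for all vertices (a,i) and (b,i+2) of TS_F with (a,i) ≤ (b,i+2) in the poset induced by TS_F, the interval [(a,i),(b,i+2)] in that poset is a diamond (it contains exactly two elements strictly between (a,i) and (b,i+2)), and the flip operators thereby defined on the set of paths of length h from (u,0) to (v,h) in TS_F (replacing the middle vertex of a length-2 subpath by the other middle element of the corresponding diamond) act transitively on that set of paths. -/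

import Mathlib

open MvPolynomial

/-- The symmetric group `𝔖ₙ`, realized as permutations of `Fin n`. -/
abbrev Pm (n : ℕ) := Equiv.Perm (Fin n)

/-- The Coxeter length of a permutation: its number of inversions. -/
def len {n : ℕ} (w : Pm n) : ℕ :=
  (Finset.univ.filter fun q : Fin n × Fin n => q.1 < q.2 ∧ w q.2 < w q.1).card

/-- Edges of the Bruhat graph `B(𝔖ₙ)`: `a → b` iff `b * a⁻¹` is a transposition and
`ℓ(a) < ℓ(b)`.  The label of the edge is `b * a⁻¹`. -/
def BEdge {n : ℕ} (a b : Pm n) : Prop :=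
  (b * a⁻¹).IsSwap ∧ len a < len b

/-- Bruhat order: `u ≤ v` iff there is a directed path from `u` to `v` in the Bruhat graph. -/
def bruhatLE {n : ℕ} : Pm n → Pm n → Prop := Relation.ReflTransGen BEdge

/-- Strict Bruhat order. -/
def bruhatLT {n : ℕ} (a b : Pm n) : Prop := bruhatLE a b ∧ a ≠ b

/-- Covering relation of Bruhat order. -/
def bruhatCov {n : ℕ} (a b : Pm n) : Prop :=
  bruhatLT a b ∧ ∀ z, bruhatLT a z → bruhatLT z b → False

/-- A path of length `h` from `u` to `v` in the Bruhat graph, encoded as a function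
`ℕ → 𝔖ₙ` normalized to be constantly `v` from time `h` on. -/
def IsPath (n h : ℕ) (u v : Pm n) (p : ℕ → Pm n) : Prop :=
  p 0 = u ∧ (∀ j, h ≤ j → p j = v) ∧ ∀ i, i < h → BEdge (p i) (p (i + 1))

/-- The `i`-th label (`0 ≤ i ≤ h-1`) of a path. -/
def lab {n : ℕ} (p : ℕ → Pm n) (i : ℕ) : Pm n := p (i + 1) * (p i)⁻¹

/-- `q` is obtained from `p` by the `i`-th flip (`1 ≤ i ≤ h-1`): they differ exactly at
position `i`. -/
def FlipAt {n : ℕ} (h i : ℕ) (p q : ℕ → Pm n) : Prop :=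
  0 < i ∧ i < h ∧ p i ≠ q i ∧ ∀ j, j ≠ i → p j = q j

/-- One application of a flip operator on paths of length `h` from `u` to `v`. -/
def FlipStep (n h : ℕ) (u v : Pm n) (p q : ℕ → Pm n) : Prop :=
  IsPath n h u v p ∧ IsPath n h u v q ∧ ∃ i, FlipAt h i p q

/-- `F` is an `h`-flipclass of paths from `u` to `v`: an orbit of the group generated by
the flip operators, i.e. a connected component under single flips. -/
def IsFlipclass (n h : ℕ) (u v : Pm n) (F : Set (ℕ → Pm n)) : Prop :=
  ∃ p, IsPath n h u v p ∧ F = {q | Relation.ReflTransGen (FlipStep n h u v) p q}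

/-- Vertex set of the support graph `S_F`. -/
def SV (n h : ℕ) (F : Set (ℕ → Pm n)) : Set (Pm n) :=
  {a | ∃ p ∈ F, ∃ i, i ≤ h ∧ p i = a}

/-- Edge relation of the support graph `S_F` (labels are determined: `b * a⁻¹`). -/
def SE (n h : ℕ) (F : Set (ℕ → Pm n)) (a b : Pm n) : Prop :=
  ∃ p ∈ F, ∃ i, i < h ∧ p i = a ∧ p (i + 1) = b

/-- Vertex set of the time-support graph `TS_F`. -/
def TSV (n h : ℕ) (F : Set (ℕ → Pm n)) : Set (Pm n × ℕ) :=
  {x | x.2 ≤ h ∧ ∃ p ∈ F, p x.2 = x.1}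

/-- Edge relation of the time-support graph `TS_F`. -/
def TSE (n h : ℕ) (F : Set (ℕ → Pm n)) (x y : Pm n × ℕ) : Prop :=
  x.2 < h ∧ y.2 = x.2 + 1 ∧ ∃ p ∈ F, p x.2 = x.1 ∧ p (x.2 + 1) = y.1

/-- In-degree of a vertex of `TS_F`. -/
noncomputable def indeg (n h : ℕ) (F : Set (ℕ → Pm n)) (x : Pm n × ℕ) : ℕ :=
  Set.ncard {w | TSE n h F w x}

/-- Out-degree of a vertex of `TS_F`. -/
noncomputable def outdeg (n h : ℕ) (F : Set (ℕ → Pm n)) (x : Pm n × ℕ) : ℕ :=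
  Set.ncard {w | TSE n h F x w}

/-- The `t`-vector of `F`: `tᵢ` is the number of vertices of `TS_F` at time `i`. -/
noncomputable def tvec (n h : ℕ) (F : Set (ℕ → Pm n)) (i : ℕ) : ℕ :=
  Set.ncard {a : Pm n | (a, i) ∈ TSV n h F}

lemma TSV_finite (n h : ℕ) (F : Set (ℕ → Pm n)) : (TSV n h F).Finite :=
  Set.Finite.subset (Set.finite_univ.prod (Set.finite_Iic h))
    (fun _ hx => Set.mem_prod.mpr ⟨Set.mem_univ _, hx.1⟩)

/-- The `ι`-polynomial of `F`:
`ι_F(x,y,t) = Σ_{(a,i) ∈ V(TS_F)} x^indeg(a,i) y^outdeg(a,i) t^i`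
(the variables `x, y, t` are `X 0, X 1, X 2`). -/
noncomputable def iota (n h : ℕ) (F : Set (ℕ → Pm n)) : MvPolynomial (Fin 3) ℤ :=
  ∑ x ∈ (TSV_finite n h F).toFinset,
    X 0 ^ indeg n h F x * X 1 ^ outdeg n h F x * X 2 ^ x.2

/-- A reflection ordering on the transpositions of `𝔖ₙ`: a total order `⪯` on the set of
transpositions such that for all `a < b < c`, either
`(a,b) ⪯ (a,c) ⪯ (b,c)` or `(b,c) ⪯ (a,c) ⪯ (a,b)`. -/
structure ReflOrder (n : ℕ) where
  le : Pm n → Pm n → Prop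
  le_refl : ∀ t : Pm n, t.IsSwap → le t t
  le_antisymm : ∀ s t : Pm n, s.IsSwap → t.IsSwap → le s t → le t s → s = t
  le_trans : ∀ r s t : Pm n, r.IsSwap → s.IsSwap → t.IsSwap → le r s → le s t → le r t
  le_total : ∀ s t : Pm n, s.IsSwap → t.IsSwap → le s t ∨ le t s
  reflection_cond : ∀ a b c : Fin n, a < b → b < c →
    (le (Equiv.swap a b) (Equiv.swap a c) ∧ le (Equiv.swap a c) (Equiv.swap b c)) ∨
    (le (Equiv.swap b c) (Equiv.swap a c) ∧ le (Equiv.swap a c) (Equiv.swap a b))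

/-- A path (of length `h`) is increasing w.r.t. an order `le` on transpositions if its
sequence of labels is weakly increasing. -/
def IncreasingRel {n : ℕ} (h : ℕ) (le : Pm n → Pm n → Prop) (p : ℕ → Pm n) : Prop :=
  ∀ i, i + 1 < h → le (lab p i) (lab p (i + 1))

/-- The number of increasing paths (w.r.t. a reflection ordering) in `F`. -/
noncomputable def cnt (n h : ℕ) (F : Set (ℕ → Pm n)) (ord : ReflOrder n) : ℕ :=
  Set.ncard {p ∈ F | IncreasingRel h ord.le p}

/-- Lexicographic comparison of the label sequences of two paths of length `h`. -/
def LabelLexLe {n : ℕ} (h : ℕ) (le : Pm n → Pm n → Prop) (p q : ℕ → Pm n) : Prop :=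
  (∀ i, i < h → lab p i = lab q i) ∨
  ∃ i, i < h ∧ (∀ j, j < i → lab p j = lab q j) ∧ lab p i ≠ lab q i ∧ le (lab p i) (lab q i)

/-- A path of length `h` from `(u,0)` to `(v,h)` in the time-support graph `TS_F`,
encoded by its sequence of permutation components. -/
def IsTSPath (n h : ℕ) (F : Set (ℕ → Pm n)) (u v : Pm n) (y : ℕ → Pm n) : Prop :=
  y 0 = u ∧ (∀ j, h ≤ j → y j = v) ∧ ∀ i, i < h → TSE n h F (y i, i) (y (i + 1), i + 1)

/-- The set of labels of the paths of `F`. -/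
def labelSet (n h : ℕ) (F : Set (ℕ → Pm n)) : Set (Pm n) :=
  {t | ∃ p ∈ F, ∃ i, i < h ∧ lab p i = t}

/-- Lexicographic order on the transpositions of `𝔖ₙ`:
`(a,b) ⪯ (c,d)` (with `a<b`, `c<d`) iff `a < c`, or `a = c` and `b ≤ d`. -/
def lexLe (n : ℕ) (s t : Pm n) : Prop :=
  ∃ a b c d : Fin n, a < b ∧ c < d ∧ s = Equiv.swap a b ∧ t = Equiv.swap c d ∧
    (a < c ∨ (a = c ∧ b ≤ d))

/-- Isomorphism of flipclasses: a pair `(f, g)` where `f` is a flips-preserving bijection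
on the underlying permutations (inducing a bijection of the path sets), and `g` is a
label-matching bijection of the label sets that is order preserving w.r.t. the
lexicographic orders. -/
def FlipclassIso (n m h : ℕ) (F : Set (ℕ → Pm n)) (F' : Set (ℕ → Pm m)) : Prop :=
  ∃ f : Pm n → Pm m, ∃ g : Pm n → Pm m,
    Set.BijOn f (SV n h F) (SV m h F') ∧
    Set.BijOn (fun p => f ∘ p) F F' ∧
    (∀ p ∈ F, ∀ q ∈ F, ∀ i, FlipAt h i p q → FlipAt h i (f ∘ p) (f ∘ q)) ∧
    Set.BijOn g (labelSet n h F) (labelSet m h F') ∧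
    (∀ p ∈ F, ∀ i, i < h → g (lab p i) = lab (f ∘ p) i) ∧
    (∀ s t, s ∈ labelSet n h F → t ∈ labelSet n h F → lexLe n s t → lexLe m (g s) (g t))

/-- `G(Γ)` is connected: any two letters moved by some label of the path `p` are joined
by a chain of labels. -/
def IrredPath (n k : ℕ) (p : ℕ → Pm n) : Prop :=
  ∀ a b : Fin n, (∃ i, i < k ∧ lab p i a ≠ a) → (∃ i, i < k ∧ lab p i b ≠ b) →
    Relation.ReflTransGen (fun x y => ∃ i, i < k ∧ lab p i = Equiv.swap x y) a b

/-- The set of positions of the values in `E` in the one-line notation of `w`,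
i.e. `w⁻¹(E)`. -/
def posSet {n : ℕ} (w : Pm n) (E : Finset (Fin n)) : Finset (Fin n) := E.image ⇑w.symm

lemma mem_posSet {n : ℕ} {w : Pm n} {E : Finset (Fin n)} {x : Fin n} :
    x ∈ posSet w E ↔ w x ∈ E := by
  constructor
  · intro hx
    rcases Finset.mem_image.mp hx with ⟨y, hy, rfl⟩
    simpa using hy
  · intro hx
    exact Finset.mem_image.mpr ⟨w x, hx, by simp⟩

lemma posSet_card {n : ℕ} (w : Pm n) (E : Finset (Fin n)) : (posSet w E).card = E.card :=
  Finset.card_image_of_injective _ w.symm.injective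

/-- The "pattern" map `r_E : 𝔖ₙ → 𝔖ₘ` (`|E| = m`): delete from the one-line notation of
`w` the values not in `E`, and renumber the values in `E` via the order preserving
bijection `E → [m]`. -/
noncomputable def rE (n m : ℕ) (E : Finset (Fin n)) (hm : E.card = m) (w : Pm n) : Pm m :=
  (((posSet w E).orderIsoOfFin (by rw [posSet_card, hm])).toEquiv.trans
    (⟨fun x => ⟨w x.1, mem_posSet.mp x.2⟩,
      fun y => ⟨w.symm y.1, mem_posSet.mpr (by simp [y.2])⟩,
      fun x => Subtype.ext (by simp),
      fun y => Subtype.ext (by simp)⟩ :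
        {x // x ∈ posSet w E} ≃ {y // y ∈ E})).trans (E.orderIsoOfFin hm).toEquiv.symm

/-- `r_E` applied to each vertex of a path. -/
noncomputable def rEPath (n m : ℕ) (E : Finset (Fin n)) (hm : E.card = m)
    (p : ℕ → Pm n) : ℕ → Pm m := fun j => rE n m E hm (p j)

/-- The total order `⪯_{r_E}` induced on the transpositions of `𝔖ₘ` by a reflection
ordering of `𝔖ₙ` via the order preserving bijection `r_E⁻¹ : [m] → E`. -/
def inducedOrd (n m : ℕ) (ord : ReflOrder n) (E : Finset (Fin n)) (hm : E.card = m) :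
    Pm m → Pm m → Prop := fun s t =>
  ∃ a b c d : Fin m, a < b ∧ c < d ∧ s = Equiv.swap a b ∧ t = Equiv.swap c d ∧
    ord.le (Equiv.swap (↑(E.orderIsoOfFin hm a)) (↑(E.orderIsoOfFin hm b)))
           (Equiv.swap (↑(E.orderIsoOfFin hm c)) (↑(E.orderIsoOfFin hm d)))

/-- Isomorphism of (unlabelled, or labelled with determined labels) directed graphs. -/
def GraphIso {α β : Type*} (V1 : Set α) (E1 : α → α → Prop)
    (V2 : Set β) (E2 : β → β → Prop) : Prop :=
  ∃ φ : α → β, Set.BijOn φ V1 V2 ∧ ∀ x ∈ V1, ∀ y ∈ V1, (E1 x y ↔ E2 (φ x) (φ y))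

/-- Vertices of the `k`-crown: `u`, `a₁,…,a_k`, `b₁,…,b_k`, `v`. -/
def CrownV (k : ℕ) : Type := (Unit ⊕ Fin k) ⊕ (Fin k ⊕ Unit)

/-- Edges of the `k`-crown: `u → aᵢ`, `aᵢ → bᵢ`, `a_{i+1} → bᵢ` (indices mod `k`),
`bᵢ → v`. -/
def crownEdge (k : ℕ) : CrownV k → CrownV k → Prop
  | Sum.inl (Sum.inl _), Sum.inl (Sum.inr _) => True
  | Sum.inl (Sum.inr i), Sum.inr (Sum.inl j) => i.val = j.val ∨ i.val = (j.val + 1) % k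
  | Sum.inr (Sum.inl _), Sum.inr (Sum.inr _) => True
  | _, _ => False

/-- The set `W₁ · W₂` (internal direct product when supports are disjoint). -/
def dprod {n : ℕ} (W1 W2 : Subgroup (Pm n)) : Set (Pm n) :=
  {w | ∃ w1 ∈ W1, ∃ w2 ∈ W2, w = w1 * w2}

/-- A path in the subgraph of the Bruhat graph induced on the subset `X`. -/
def IsPathIn (n : ℕ) (X : Set (Pm n)) (h : ℕ) (u v : Pm n) (p : ℕ → Pm n) : Prop :=
  IsPath n h u v p ∧ ∀ j, p j ∈ X

/-- Flip step within the induced subgraph on `X`. -/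
def FlipStepIn (n : ℕ) (X : Set (Pm n)) (h : ℕ) (u v : Pm n) (p q : ℕ → Pm n) : Prop :=
  IsPathIn n X h u v p ∧ IsPathIn n X h u v q ∧ ∃ i, FlipAt h i p q

/-- Flipclass of paths in the induced subgraph on `X`. -/
def IsFlipclassIn (n : ℕ) (X : Set (Pm n)) (h : ℕ) (u v : Pm n)
    (F : Set (ℕ → Pm n)) : Prop :=
  ∃ p, IsPathIn n X h u v p ∧ F = {q | Relation.ReflTransGen (FlipStepIn n X h u v) p q}

/-- `Δ` (a path of length `k`, normalized) is the projection (deduplication) of the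
vertexwise-projected sequence `s` (defined on `0,…,hh`). -/
def IsProj (n hh k : ℕ) (s Δ : ℕ → Pm n) : Prop :=
  ∃ φ : ℕ → ℕ, Monotone φ ∧ φ 0 = 0 ∧ (∀ j, hh ≤ j → φ j = k) ∧
    (∀ j, j < hh →
      (s (j + 1) = s j ∧ φ (j + 1) = φ j) ∨ (s (j + 1) ≠ s j ∧ φ (j + 1) = φ j + 1)) ∧
    (∀ j, j ≤ hh → s j = Δ (φ j)) ∧ ∀ j, k ≤ j → Δ j = Δ k

open Equiv

lemma len_lt_len_swap_mul {n : ℕ} {x y : Fin n} (hxy : x < y) (w : Pm n)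
    (hpos : w⁻¹ x < w⁻¹ y) : len w < len (Equiv.swap x y * w) := by
  set P := w⁻¹ x with hPdef
  set Q := w⁻¹ y with hQdef
  have hwP : w P = x := w.apply_symm_apply x
  have hwQ : w Q = y := w.apply_symm_apply y
  have hPQ : P < Q := hpos
  have hxney : x ≠ y := ne_of_lt hxy
  have hvalx : ∀ z, w z = x ↔ z = P := by
    intro z; rw [← hwP]; exact w.injective.eq_iff
  have hvaly : ∀ z, w z = y ↔ z = Q := by
    intro z; rw [← hwQ]; exact w.injective.eq_iff
  set s := (Finset.univ.filter fun q : Fin n × Fin n => q.1 < q.2 ∧ w q.2 < w q.1) with hs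
  set t := (Finset.univ.filter fun q : Fin n × Fin n =>
      q.1 < q.2 ∧ (Equiv.swap x y * w) q.2 < (Equiv.swap x y * w) q.1) with ht
  have happ : ∀ z, (Equiv.swap x y * w) z = Equiv.swap x y (w z) := fun z => rfl
  have hPQt : (P, Q) ∈ t := by
    rw [ht, Finset.mem_filter]
    refine ⟨Finset.mem_univ _, hPQ, ?_⟩
    rw [happ, happ, hwP, hwQ, swap_apply_left, swap_apply_right]
    exact hxy
  set f : Fin n × Fin n → Fin n × Fin n := fun z =>
    if z.1 = Q ∧ x < w z.2 then (P, z.2)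
    else if z.2 = P ∧ w z.1 < y then (z.1, Q) else z with hf
  have hmem : ∀ a, a ∈ s → a.1 < a.2 ∧ w a.2 < w a.1 := by
    intro a ha; rw [hs, Finset.mem_filter] at ha; exact ha.2
  have hmaps : ∀ a ∈ s, f a ∈ t.erase (P, Q) := by
    intro a ha
    obtain ⟨hlt, hinv⟩ := hmem a ha
    rw [Finset.mem_erase, ht, Finset.mem_filter]
    by_cases h1 : a.1 = Q ∧ x < w a.2
    · -- f a = (P, a.2)
      have hfa : f a = (P, a.2) := by simp only [hf]; rw [if_pos h1]
      have hq2 : w a.2 < y := by rw [← hwQ, ← h1.1]; exact hinv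
      have ha2x : w a.2 ≠ x := ne_of_gt h1.2
      have ha2y : w a.2 ≠ y := ne_of_lt hq2
      have ha2Q : a.2 ≠ Q := fun hc => ha2y (by rw [hc, hwQ])
      rw [hfa]
      refine ⟨by simp [ha2Q], Finset.mem_univ _, lt_trans (h1.1 ▸ hPQ) hlt, ?_⟩
      rw [happ, happ, hwP, swap_apply_left, swap_apply_of_ne_of_ne ha2x ha2y]
      exact hq2
    · by_cases h2 : a.2 = P ∧ w a.1 < y
      · have hfa : f a = (a.1, Q) := by simp only [hf]; rw [if_neg h1, if_pos h2]
        have hp1 : x < w a.1 := by rw [← hwP, ← h2.1]; exact hinv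
        have ha1x : w a.1 ≠ x := ne_of_gt hp1
        have ha1y : w a.1 ≠ y := ne_of_lt h2.2
        have ha1P : a.1 ≠ P := fun hc => ha1x (by rw [hc, hwP])
        rw [hfa]
        refine ⟨by simp [ha1P], Finset.mem_univ _, lt_trans (h2.1 ▸ hlt) hPQ, ?_⟩
        rw [happ, happ, hwQ, swap_apply_right, swap_apply_of_ne_of_ne ha1x ha1y]
        exact hp1
      · have hfa : f a = a := by simp only [hf]; rw [if_neg h1, if_neg h2]
        rw [hfa]
        have hne : a ≠ (P, Q) := by
          intro hc
          rw [hc] at hinv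
          simp only [hwP, hwQ] at hinv
          exact absurd hxy (not_lt_of_gt hinv)
        refine ⟨hne, Finset.mem_univ _, hlt, ?_⟩
        rw [happ, happ]
        by_cases hp1 : a.1 = P
        · -- w a.1 = x, so w a.2 < x
          have hwa1 : w a.1 = x := by rw [hp1, hwP]
          have hwa2 : w a.2 < x := hwa1 ▸ hinv
          rw [hwa1, swap_apply_left,
            swap_apply_of_ne_of_ne (ne_of_lt hwa2) (ne_of_lt (lt_trans hwa2 hxy))]
          exact lt_trans hwa2 hxy
        · by_cases hq1 : a.1 = Q
          · have hwa1 : w a.1 = y := by rw [hq1, hwQ]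
            have hxa2 : ¬ x < w a.2 := fun hc => h1 ⟨hq1, hc⟩
            have ha2P : a.2 ≠ P := by
              intro hc; rw [hc] at hlt; exact absurd (lt_trans hlt hPQ) (by rw [hq1]; simp)
            have hwa2x : w a.2 ≠ x := by rw [Ne, hvalx]; exact ha2P
            have hwa2 : w a.2 < x := lt_of_le_of_ne (not_lt.mp hxa2) hwa2x
            rw [hwa1, swap_apply_right,
              swap_apply_of_ne_of_ne hwa2x (ne_of_lt (lt_trans hwa2 hxy))]
            exact hwa2
          · -- a.1 ∉ {P, Q}
            have hwa1x : w a.1 ≠ x := by rw [Ne, hvalx]; exact hp1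
            have hwa1y : w a.1 ≠ y := by rw [Ne, hvaly]; exact hq1
            by_cases hp2 : a.2 = P
            · have hya1 : ¬ w a.1 < y := fun hc => h2 ⟨hp2, hc⟩
              have hwa1 : y < w a.1 := lt_of_le_of_ne (not_lt.mp hya1) (Ne.symm hwa1y)
              rw [hp2, hwP, swap_apply_left, swap_apply_of_ne_of_ne hwa1x hwa1y]
              exact hwa1
            · by_cases hq2 : a.2 = Q
              · have hwa2 : w a.2 = y := by rw [hq2, hwQ]
                rw [hwa2, swap_apply_right, swap_apply_of_ne_of_ne hwa1x hwa1y]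
                exact lt_trans hxy (hwa2 ▸ hinv)
              · have hwa2x : w a.2 ≠ x := by rw [Ne, hvalx]; exact hp2
                have hwa2y : w a.2 ≠ y := by rw [Ne, hvaly]; exact hq2
                rw [swap_apply_of_ne_of_ne hwa1x hwa1y,
                  swap_apply_of_ne_of_ne hwa2x hwa2y]
                exact hinv
  have hinj : Set.InjOn f ↑s := by
    intro a1 ha1 a2 ha2 heq
    obtain ⟨hlt1, hinv1⟩ := hmem a1 (by exact_mod_cast ha1)
    obtain ⟨hlt2, hinv2⟩ := hmem a2 (by exact_mod_cast ha2)
    by_cases h11 : a1.1 = Q ∧ x < w a1.2 <;>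
      by_cases h21 : a2.1 = Q ∧ x < w a2.2
    · -- both branch 1
      have e1 : f a1 = (P, a1.2) := by simp only [hf]; rw [if_pos h11]
      have e2 : f a2 = (P, a2.2) := by simp only [hf]; rw [if_pos h21]
      rw [e1, e2, Prod.mk.injEq] at heq
      exact Prod.ext (h11.1.trans h21.1.symm) heq.2
    · have e1 : f a1 = (P, a1.2) := by simp only [hf]; rw [if_pos h11]
      by_cases h22 : a2.2 = P ∧ w a2.1 < y
      · -- 1 vs 2
        have e2 : f a2 = (a2.1, Q) := by simp only [hf]; rw [if_neg h21, if_pos h22]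
        rw [e1, e2, Prod.mk.injEq] at heq
        -- a1.2 = Q, but a1.2 > Q
        exfalso
        have : Q < a1.2 := h11.1 ▸ hlt1
        rw [heq.2] at this; exact lt_irrefl _ this
      · -- 1 vs 3
        have e2 : f a2 = a2 := by simp only [hf]; rw [if_neg h21, if_neg h22]
        rw [e1, e2] at heq
        exfalso
        have h1 : a2.1 = P := by rw [← heq]
        have h2 : a2.2 = a1.2 := by rw [← heq]
        have : w a2.2 < x := by rw [← hwP, ← h1]; exact hinv2
        rw [h2] at this
        exact absurd h11.2 (not_lt_of_gt this)
    · have e2 : f a2 = (P, a2.2) := by simp only [hf]; rw [if_pos h21]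
      by_cases h12 : a1.2 = P ∧ w a1.1 < y
      · have e1 : f a1 = (a1.1, Q) := by simp only [hf]; rw [if_neg h11, if_pos h12]
        rw [e1, e2, Prod.mk.injEq] at heq
        exfalso
        have : Q < a2.2 := h21.1 ▸ hlt2
        rw [← heq.2] at this; exact lt_irrefl _ this
      · have e1 : f a1 = a1 := by simp only [hf]; rw [if_neg h11, if_neg h12]
        rw [e1, e2] at heq
        exfalso
        have h1 : a1.1 = P := by rw [heq]
        have h2 : a1.2 = a2.2 := by rw [heq]
        have : w a1.2 < x := by rw [← hwP, ← h1]; exact hinv1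
        rw [h2] at this
        exact absurd h21.2 (not_lt_of_gt this)
    · by_cases h12 : a1.2 = P ∧ w a1.1 < y <;>
        by_cases h22 : a2.2 = P ∧ w a2.1 < y
      · have e1 : f a1 = (a1.1, Q) := by simp only [hf]; rw [if_neg h11, if_pos h12]
        have e2 : f a2 = (a2.1, Q) := by simp only [hf]; rw [if_neg h21, if_pos h22]
        rw [e1, e2, Prod.mk.injEq] at heq
        exact Prod.ext heq.1 (h12.1.trans h22.1.symm)
      · -- 2 vs 3
        have e1 : f a1 = (a1.1, Q) := by simp only [hf]; rw [if_neg h11, if_pos h12]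
        have e2 : f a2 = a2 := by simp only [hf]; rw [if_neg h21, if_neg h22]
        rw [e1, e2] at heq
        exfalso
        have h1 : a2.2 = Q := by rw [← heq]
        have h2 : a2.1 = a1.1 := by rw [← heq]
        have : y < w a2.1 := by rw [← hwQ, ← h1]; exact hinv2
        rw [h2] at this
        exact absurd h12.2 (not_lt_of_gt this)
      · have e2 : f a2 = (a2.1, Q) := by simp only [hf]; rw [if_neg h21, if_pos h22]
        have e1 : f a1 = a1 := by simp only [hf]; rw [if_neg h11, if_neg h12]
        rw [e1, e2] at heq
        exfalso
        have h1 : a1.2 = Q := by rw [heq]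
        have h2 : a1.1 = a2.1 := by rw [heq]
        have : y < w a1.1 := by rw [← hwQ, ← h1]; exact hinv1
        rw [h2] at this
        exact absurd h22.2 (not_lt_of_gt this)
      · have e1 : f a1 = a1 := by simp only [hf]; rw [if_neg h11, if_neg h12]
        have e2 : f a2 = a2 := by simp only [hf]; rw [if_neg h21, if_neg h22]
        rw [e1, e2] at heq; exact heq
  have hcard : s.card ≤ (t.erase (P, Q)).card :=
    Finset.card_le_card_of_injOn f hmaps hinj
  have : (t.erase (P, Q)).card = t.card - 1 := Finset.card_erase_of_mem hPQt
  have htpos : 0 < t.card := Finset.card_pos.mpr ⟨_, hPQt⟩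
  have : len w = s.card := rfl
  have : len (Equiv.swap x y * w) = t.card := rfl
  omega

lemma len_swap_mul_lt_iff {n : ℕ} {x y : Fin n} (hxy : x < y) (w : Pm n) :
    len w < len (Equiv.swap x y * w) ↔ w⁻¹ x < w⁻¹ y := by
  constructor
  · intro hlen
    by_contra hc
    have hne : w⁻¹ x ≠ w⁻¹ y := fun hh => (ne_of_lt hxy) (by
      have := congrArg w hh; simpa [Equiv.Perm.inv_def] using this)
    have hyx : w⁻¹ y < w⁻¹ x := lt_of_le_of_ne (not_lt.mp hc) hne.symm
    have h2 : (Equiv.swap x y * w)⁻¹ x < (Equiv.swap x y * w)⁻¹ y := by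
      simp only [mul_inv_rev, Equiv.swap_inv, Equiv.Perm.mul_apply,
        Equiv.swap_apply_left, Equiv.swap_apply_right]
      exact hyx
    have h3 := len_lt_len_swap_mul hxy (Equiv.swap x y * w) h2
    rw [← mul_assoc, Equiv.swap_mul_self, one_mul] at h3
    omega
  · exact len_lt_len_swap_mul hxy w

lemma bedge_swap_iff {n : ℕ} (e f : Fin n) (hef : e ≠ f) (z : Pm n) :
    BEdge z (Equiv.swap e f * z) ↔
      ((e < f ∧ z⁻¹ e < z⁻¹ f) ∨ (f < e ∧ z⁻¹ f < z⁻¹ e)) := by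
  have hsw : (Equiv.swap e f * z) * z⁻¹ = Equiv.swap e f := by group
  rcases hef.lt_or_gt with h | h
  · rw [BEdge, hsw, len_swap_mul_lt_iff h z]
    constructor
    · rintro ⟨-, hc⟩; exact Or.inl ⟨h, hc⟩
    · rintro (⟨-, hc⟩ | ⟨hc, -⟩)
      · exact ⟨⟨e, f, hef, rfl⟩, hc⟩
      · exact absurd h (not_lt_of_gt hc)
  · rw [BEdge, hsw, Equiv.swap_comm, len_swap_mul_lt_iff h z]
    constructor
    · rintro ⟨-, hc⟩; exact Or.inr ⟨h, hc⟩
    · rintro (⟨hc, -⟩ | ⟨-, hc⟩)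
      · exact absurd h (not_lt_of_gt hc)
      · exact ⟨⟨f, e, hef.symm, rfl⟩, hc⟩

lemma bedge_ex {n : ℕ} {a b : Pm n} (h : BEdge a b) :
    ∃ e f, e < f ∧ b = Equiv.swap e f * a ∧ a⁻¹ e < a⁻¹ f := by
  obtain ⟨⟨e, f, hef, hab⟩, hlen⟩ := h
  have hb : b = Equiv.swap e f * a := by
    rw [← hab]; group
  rcases hef.lt_or_gt with hlt | hlt
  · refine ⟨e, f, hlt, hb, ?_⟩
    rw [← len_swap_mul_lt_iff hlt a, ← hb]; exact hlen
  · refine ⟨f, e, hlt, by rw [hb, Equiv.swap_comm], ?_⟩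
    rw [← len_swap_mul_lt_iff hlt a, ← Equiv.swap_comm, ← hb]; exact hlen

lemma not_isSwap_of_three {n : ℕ} (g : Pm n) (z1 z2 z3 : Fin n)
    (h12 : z1 ≠ z2) (h13 : z1 ≠ z3) (h23 : z2 ≠ z3)
    (m1 : g z1 ≠ z1) (m2 : g z2 ≠ z2) (m3 : g z3 ≠ z3) : ¬ g.IsSwap := by
  rintro ⟨p, q, hpq, rfl⟩
  have hz : ∀ z, Equiv.swap p q z ≠ z → z = p ∨ z = q := by
    intro z hz
    by_contra hc
    push_neg at hc
    exact hz (Equiv.swap_apply_of_ne_of_ne hc.1 hc.2)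
  rcases hz z1 m1 with h | h <;> rcases hz z2 m2 with h' | h' <;>
    rcases hz z3 m3 with h'' | h'' <;>
    first
      | exact h12 (h.trans h'.symm)
      | exact h13 (h.trans h''.symm)
      | exact h23 (h'.trans h''.symm)

lemma tri {n : ℕ} (p q r : Fin n) (hpq : p ≠ q) (hpr : p ≠ r) (hqr : q ≠ r)
    (u w x : Pm n) (σ : Pm n)
    (hσp : σ p = q) (hσq : σ q = r) (hσr : σ r = p)
    (hfix : ∀ z, z ≠ p → z ≠ q → z ≠ r → σ z = z)
    (hw : w = σ * u)
    (hx1 : BEdge u x) (hx2 : BEdge x w) :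
    ∃ y, y ≠ x ∧ {z | BEdge u z ∧ BEdge z w} = {x, y} := by
  have hqp := hpq.symm
  have hrp := hpr.symm
  have hrq := hqr.symm
  -- decompositions of σ
  have hd1 : w = Equiv.swap p r * (Equiv.swap p q * u) := by
    rw [hw, ← mul_assoc]
    congr 1
    ext z
    simp only [Equiv.Perm.mul_apply]
    rcases eq_or_ne z p with rfl | hzp
    · rw [hσp, Equiv.swap_apply_left, Equiv.swap_apply_of_ne_of_ne hqp hqr]
    rcases eq_or_ne z q with rfl | hzq
    · rw [hσq, Equiv.swap_apply_right, Equiv.swap_apply_left]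
    rcases eq_or_ne z r with rfl | hzr
    · rw [hσr, Equiv.swap_apply_of_ne_of_ne hrp hrq, Equiv.swap_apply_right]
    · rw [hfix z hzp hzq hzr, Equiv.swap_apply_of_ne_of_ne hzp hzq,
        Equiv.swap_apply_of_ne_of_ne hzp hzr]
  have hd2 : w = Equiv.swap p q * (Equiv.swap q r * u) := by
    rw [hw, ← mul_assoc]
    congr 1
    ext z
    simp only [Equiv.Perm.mul_apply]
    rcases eq_or_ne z p with rfl | hzp
    · rw [hσp, Equiv.swap_apply_of_ne_of_ne hpq hpr, Equiv.swap_apply_left]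
    rcases eq_or_ne z q with rfl | hzq
    · rw [hσq, Equiv.swap_apply_left, Equiv.swap_apply_of_ne_of_ne hrp hrq]
    rcases eq_or_ne z r with rfl | hzr
    · rw [hσr, Equiv.swap_apply_right, Equiv.swap_apply_right]
    · rw [hfix z hzp hzq hzr, Equiv.swap_apply_of_ne_of_ne hzq hzr,
        Equiv.swap_apply_of_ne_of_ne hzp hzq]
  have hd3 : w = Equiv.swap q r * (Equiv.swap p r * u) := by
    rw [hw, ← mul_assoc]
    congr 1
    ext z
    simp only [Equiv.Perm.mul_apply]
    rcases eq_or_ne z p with rfl | hzp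
    · rw [hσp, Equiv.swap_apply_left, Equiv.swap_apply_right]
    rcases eq_or_ne z q with rfl | hzq
    · rw [hσq, Equiv.swap_apply_of_ne_of_ne hqp hqr, Equiv.swap_apply_left]
    rcases eq_or_ne z r with rfl | hzr
    · rw [hσr, Equiv.swap_apply_right, Equiv.swap_apply_of_ne_of_ne hpq hpr]
    · rw [hfix z hzp hzq hzr, Equiv.swap_apply_of_ne_of_ne hzp hzr,
        Equiv.swap_apply_of_ne_of_ne hzq hzr]
  -- the three candidate middles and their characterizations
  have m1 : (BEdge u (Equiv.swap p q * u) ∧ BEdge (Equiv.swap p q * u) w) ↔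
      (((p < q ∧ u⁻¹ p < u⁻¹ q) ∨ (q < p ∧ u⁻¹ q < u⁻¹ p)) ∧
       ((p < r ∧ u⁻¹ q < u⁻¹ r) ∨ (r < p ∧ u⁻¹ r < u⁻¹ q))) := by
    have e1 := bedge_swap_iff p q hpq u
    have e2 := bedge_swap_iff p r hpr (Equiv.swap p q * u)
    rw [← hd1] at e2
    have i1 : (Equiv.swap p q * u)⁻¹ p = u⁻¹ q := by
      simp [mul_inv_rev, Equiv.swap_inv, Equiv.Perm.mul_apply]
    have i2 : (Equiv.swap p q * u)⁻¹ r = u⁻¹ r := by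
      simp [mul_inv_rev, Equiv.swap_inv, Equiv.Perm.mul_apply,
        Equiv.swap_apply_of_ne_of_ne hrp hrq]
    rw [i1, i2] at e2
    exact and_congr e1 e2
  have m2 : (BEdge u (Equiv.swap q r * u) ∧ BEdge (Equiv.swap q r * u) w) ↔
      (((q < r ∧ u⁻¹ q < u⁻¹ r) ∨ (r < q ∧ u⁻¹ r < u⁻¹ q)) ∧
       ((p < q ∧ u⁻¹ p < u⁻¹ r) ∨ (q < p ∧ u⁻¹ r < u⁻¹ p))) := by
    have e1 := bedge_swap_iff q r hqr u
    have e2 := bedge_swap_iff p q hpq (Equiv.swap q r * u)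
    rw [← hd2] at e2
    have i1 : (Equiv.swap q r * u)⁻¹ p = u⁻¹ p := by
      simp [mul_inv_rev, Equiv.swap_inv, Equiv.Perm.mul_apply,
        Equiv.swap_apply_of_ne_of_ne hpq hpr]
    have i2 : (Equiv.swap q r * u)⁻¹ q = u⁻¹ r := by
      simp [mul_inv_rev, Equiv.swap_inv, Equiv.Perm.mul_apply]
    rw [i1, i2] at e2
    exact and_congr e1 e2
  have m3 : (BEdge u (Equiv.swap p r * u) ∧ BEdge (Equiv.swap p r * u) w) ↔
      (((p < r ∧ u⁻¹ p < u⁻¹ r) ∨ (r < p ∧ u⁻¹ r < u⁻¹ p)) ∧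
       ((q < r ∧ u⁻¹ q < u⁻¹ p) ∨ (r < q ∧ u⁻¹ p < u⁻¹ q))) := by
    have e1 := bedge_swap_iff p r hpr u
    have e2 := bedge_swap_iff q r hqr (Equiv.swap p r * u)
    rw [← hd3] at e2
    have i1 : (Equiv.swap p r * u)⁻¹ q = u⁻¹ q := by
      simp [mul_inv_rev, Equiv.swap_inv, Equiv.Perm.mul_apply,
        Equiv.swap_apply_of_ne_of_ne hqp hqr]
    have i2 : (Equiv.swap p r * u)⁻¹ r = u⁻¹ p := by
      simp [mul_inv_rev, Equiv.swap_inv, Equiv.Perm.mul_apply]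
    rw [i1, i2] at e2
    exact and_congr e1 e2
  -- support restriction: any middle is one of the three candidates
  have key : ∀ z, BEdge u z ∧ BEdge z w →
      z = Equiv.swap p q * u ∨ z = Equiv.swap q r * u ∨ z = Equiv.swap p r * u := by
    intro z ⟨hz1, hz2⟩
    obtain ⟨e, f, hef, hz, -⟩ := bedge_ex hz1
    have hgs : (w * z⁻¹).IsSwap := hz2.1
    have hg : w * z⁻¹ = σ * Equiv.swap e f := by
      rw [hw, hz, mul_inv_rev, Equiv.swap_inv, ← mul_assoc, mul_assoc σ,
        mul_inv_cancel, mul_one]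
    have hgapp : ∀ ζ, (w * z⁻¹) ζ = σ (Equiv.swap e f ζ) := by
      intro ζ; rw [hg]; rfl
    have hmoves : ∀ ζ, ζ ≠ e → ζ ≠ f → ζ = p ∨ ζ = q ∨ ζ = r → (w * z⁻¹) ζ ≠ ζ := by
      intro ζ hζe hζf hζ
      rw [hgapp, Equiv.swap_apply_of_ne_of_ne hζe hζf]
      rcases hζ with rfl | rfl | rfl
      · rw [hσp]; exact hqp
      · rw [hσq]; exact hrq
      · rw [hσr]; exact hpr
    have hep : e = p ∨ e = q ∨ e = r := by
      by_contra hc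
      push_neg at hc
      obtain ⟨hep, heq, her⟩ := hc
      have hge : (w * z⁻¹) e ≠ e := by
        rw [hgapp, Equiv.swap_apply_left]
        intro hcc
        have : σ e = e := hfix e hep heq her
        have : f = e := σ.injective (by rw [hcc, this])
        exact hef.ne' this
      have hat : ∀ k1 k2 : Fin n, k1 ≠ f → k2 ≠ f → k1 ≠ k2 →
          (k1 = p ∨ k1 = q ∨ k1 = r) → (k2 = p ∨ k2 = q ∨ k2 = r) → False := by
        intro k1 k2 hk1f hk2f hk12 hk1 hk2
        have hk1e : k1 ≠ e := by rintro rfl; rcases hk1 with rfl|rfl|rfl <;> simp_all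
        have hk2e : k2 ≠ e := by rintro rfl; rcases hk2 with rfl|rfl|rfl <;> simp_all
        exact not_isSwap_of_three _ e k1 k2 (Ne.symm hk1e) (Ne.symm hk2e) hk12
          hge (hmoves k1 hk1e hk1f hk1) (hmoves k2 hk2e hk2f hk2) hgs
      rcases eq_or_ne f p with rfl | hfp
      · exact hat q r hqp.symm.symm hrp.symm.symm hqr (Or.inr (Or.inl rfl)) (Or.inr (Or.inr rfl))
      rcases eq_or_ne f q with rfl | hfq
      · exact hat p r hpq hrq.symm.symm hpr (Or.inl rfl) (Or.inr (Or.inr rfl))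
      rcases eq_or_ne f r with rfl | hfr
      · exact hat p q hpr hqr hpq (Or.inl rfl) (Or.inr (Or.inl rfl))
      · exact hat p q hfp.symm hfq.symm hpq (Or.inl rfl) (Or.inr (Or.inl rfl))
    have hfin : f = p ∨ f = q ∨ f = r := by
      by_contra hc
      push_neg at hc
      obtain ⟨hfp, hfq, hfr⟩ := hc
      have hgf : (w * z⁻¹) f ≠ f := by
        rw [hgapp, Equiv.swap_apply_right]
        intro hcc
        rcases hep with rfl | rfl | rfl
        · rw [hσp] at hcc; exact hfq hcc.symm
        · rw [hσq] at hcc; exact hfr hcc.symm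
        · rw [hσr] at hcc; exact hfp hcc.symm
      have hat : ∀ k1 k2 : Fin n, k1 ≠ e → k2 ≠ e → k1 ≠ k2 →
          (k1 = p ∨ k1 = q ∨ k1 = r) → (k2 = p ∨ k2 = q ∨ k2 = r) → False := by
        intro k1 k2 hk1e hk2e hk12 hk1 hk2
        have hk1f : k1 ≠ f := by rintro rfl; rcases hk1 with rfl|rfl|rfl <;> simp_all
        have hk2f : k2 ≠ f := by rintro rfl; rcases hk2 with rfl|rfl|rfl <;> simp_all
        exact not_isSwap_of_three _ f k1 k2 (Ne.symm hk1f) (Ne.symm hk2f) hk12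
          hgf (hmoves k1 hk1e hk1f hk1) (hmoves k2 hk2e hk2f hk2) hgs
      rcases hep with rfl | rfl | rfl
      · exact hat q r hqp hrp hqr (Or.inr (Or.inl rfl)) (Or.inr (Or.inr rfl))
      · exact hat p r hpq hrq hpr (Or.inl rfl) (Or.inr (Or.inr rfl))
      · exact hat p q hpr hqr hpq (Or.inl rfl) (Or.inr (Or.inl rfl))
    rcases hep with rfl | rfl | rfl <;> rcases hfin with rfl | rfl | rfl
    · exact absurd rfl hef.ne
    · exact Or.inl hz
    · exact Or.inr (Or.inr hz)
    · exact Or.inl (by rw [hz, Equiv.swap_comm])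
    · exact absurd rfl hef.ne
    · exact Or.inr (Or.inl hz)
    · exact Or.inr (Or.inr (by rw [hz, Equiv.swap_comm]))
    · exact Or.inr (Or.inl (by rw [hz, Equiv.swap_comm]))
    · exact absurd rfl hef.ne
  -- distinctness of candidates
  have hne12 : Equiv.swap p q * u ≠ Equiv.swap q r * u := by
    intro hc
    have h' := Equiv.ext_iff.mp (mul_right_cancel hc) p
    rw [Equiv.swap_apply_left, Equiv.swap_apply_of_ne_of_ne hpq hpr] at h'
    exact hqp h'
  have hne13 : Equiv.swap p q * u ≠ Equiv.swap p r * u := by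
    intro hc
    have h' := Equiv.ext_iff.mp (mul_right_cancel hc) q
    rw [Equiv.swap_apply_right, Equiv.swap_apply_of_ne_of_ne hqp hqr] at h'
    exact hpq h'
  have hne23 : Equiv.swap q r * u ≠ Equiv.swap p r * u := by
    intro hc
    have h' := Equiv.ext_iff.mp (mul_right_cancel hc) q
    rw [Equiv.swap_apply_left, Equiv.swap_apply_of_ne_of_ne hqp hqr] at h'
    exact hrq h'
  -- numeric distinctness facts for omega
  have vpq : (p : ℕ) ≠ (q : ℕ) := fun hh => hpq (Fin.val_injective hh)
  have vpr : (p : ℕ) ≠ (r : ℕ) := fun hh => hpr (Fin.val_injective hh)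
  have vqr : (q : ℕ) ≠ (r : ℕ) := fun hh => hqr (Fin.val_injective hh)
  have wpq : ((u⁻¹ p : Fin n) : ℕ) ≠ ((u⁻¹ q : Fin n) : ℕ) :=
    fun hh => ((Equiv.injective u⁻¹).ne hpq) (Fin.val_injective hh)
  have wpr : ((u⁻¹ p : Fin n) : ℕ) ≠ ((u⁻¹ r : Fin n) : ℕ) :=
    fun hh => ((Equiv.injective u⁻¹).ne hpr) (Fin.val_injective hh)
  have wqr : ((u⁻¹ q : Fin n) : ℕ) ≠ ((u⁻¹ r : Fin n) : ℕ) :=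
    fun hh => ((Equiv.injective u⁻¹).ne hqr) (Fin.val_injective hh)
  rcases key x ⟨hx1, hx2⟩ with hxe | hxe | hxe
  · -- x is candidate 1
    have hA1 := m1.mp (by rw [← hxe]; exact ⟨hx1, hx2⟩)
    by_cases hA2 : (((q < r ∧ u⁻¹ q < u⁻¹ r) ∨ (r < q ∧ u⁻¹ r < u⁻¹ q)) ∧
       ((p < q ∧ u⁻¹ p < u⁻¹ r) ∨ (q < p ∧ u⁻¹ r < u⁻¹ p))) <;>
      by_cases hA3 : (((p < r ∧ u⁻¹ p < u⁻¹ r) ∨ (r < p ∧ u⁻¹ r < u⁻¹ p)) ∧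
       ((q < r ∧ u⁻¹ q < u⁻¹ p) ∨ (r < q ∧ u⁻¹ p < u⁻¹ q)))
    · exfalso; simp only [Fin.lt_def] at hA1 hA2 hA3; omega
    · refine ⟨Equiv.swap q r * u, by rw [hxe]; exact hne12.symm, ?_⟩
      ext z
      simp only [Set.mem_setOf_eq, Set.mem_insert_iff, Set.mem_singleton_iff]
      constructor
      · intro hz
        rcases key z hz with rfl | rfl | rfl
        · exact Or.inl hxe.symm
        · exact Or.inr rfl
        · exact absurd (m3.mp hz) hA3
      · rintro (rfl | rfl)
        · exact ⟨hx1, hx2⟩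
        · exact m2.mpr hA2
    · refine ⟨Equiv.swap p r * u, by rw [hxe]; exact hne13.symm, ?_⟩
      ext z
      simp only [Set.mem_setOf_eq, Set.mem_insert_iff, Set.mem_singleton_iff]
      constructor
      · intro hz
        rcases key z hz with rfl | rfl | rfl
        · exact Or.inl hxe.symm
        · exact absurd (m2.mp hz) hA2
        · exact Or.inr rfl
      · rintro (rfl | rfl)
        · exact ⟨hx1, hx2⟩
        · exact m3.mpr hA3
    · exfalso; simp only [Fin.lt_def] at hA1 hA2 hA3; omega
  · -- x is candidate 2
    have hA2 := m2.mp (by rw [← hxe]; exact ⟨hx1, hx2⟩)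
    by_cases hA1 : (((p < q ∧ u⁻¹ p < u⁻¹ q) ∨ (q < p ∧ u⁻¹ q < u⁻¹ p)) ∧
       ((p < r ∧ u⁻¹ q < u⁻¹ r) ∨ (r < p ∧ u⁻¹ r < u⁻¹ q))) <;>
      by_cases hA3 : (((p < r ∧ u⁻¹ p < u⁻¹ r) ∨ (r < p ∧ u⁻¹ r < u⁻¹ p)) ∧
       ((q < r ∧ u⁻¹ q < u⁻¹ p) ∨ (r < q ∧ u⁻¹ p < u⁻¹ q)))
    · exfalso; simp only [Fin.lt_def] at hA1 hA2 hA3; omega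
    · refine ⟨Equiv.swap p q * u, by rw [hxe]; exact hne12, ?_⟩
      ext z
      simp only [Set.mem_setOf_eq, Set.mem_insert_iff, Set.mem_singleton_iff]
      constructor
      · intro hz
        rcases key z hz with rfl | rfl | rfl
        · exact Or.inr rfl
        · exact Or.inl hxe.symm
        · exact absurd (m3.mp hz) hA3
      · rintro (rfl | rfl)
        · exact ⟨hx1, hx2⟩
        · exact m1.mpr hA1
    · refine ⟨Equiv.swap p r * u, by rw [hxe]; exact hne23.symm, ?_⟩
      ext z
      simp only [Set.mem_setOf_eq, Set.mem_insert_iff, Set.mem_singleton_iff]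
      constructor
      · intro hz
        rcases key z hz with rfl | rfl | rfl
        · exact absurd (m1.mp hz) hA1
        · exact Or.inl hxe.symm
        · exact Or.inr rfl
      · rintro (rfl | rfl)
        · exact ⟨hx1, hx2⟩
        · exact m3.mpr hA3
    · exfalso; simp only [Fin.lt_def] at hA1 hA2 hA3; omega
  · -- x is candidate 3
    have hA3 := m3.mp (by rw [← hxe]; exact ⟨hx1, hx2⟩)
    by_cases hA1 : (((p < q ∧ u⁻¹ p < u⁻¹ q) ∨ (q < p ∧ u⁻¹ q < u⁻¹ p)) ∧
       ((p < r ∧ u⁻¹ q < u⁻¹ r) ∨ (r < p ∧ u⁻¹ r < u⁻¹ q))) <;>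
      by_cases hA2 : (((q < r ∧ u⁻¹ q < u⁻¹ r) ∨ (r < q ∧ u⁻¹ r < u⁻¹ q)) ∧
       ((p < q ∧ u⁻¹ p < u⁻¹ r) ∨ (q < p ∧ u⁻¹ r < u⁻¹ p)))
    · exfalso; simp only [Fin.lt_def] at hA1 hA2 hA3; omega
    · refine ⟨Equiv.swap p q * u, by rw [hxe]; exact hne13, ?_⟩
      ext z
      simp only [Set.mem_setOf_eq, Set.mem_insert_iff, Set.mem_singleton_iff]
      constructor
      · intro hz
        rcases key z hz with rfl | rfl | rfl
        · exact Or.inr rfl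
        · exact absurd (m2.mp hz) hA2
        · exact Or.inl hxe.symm
      · rintro (rfl | rfl)
        · exact ⟨hx1, hx2⟩
        · exact m1.mpr hA1
    · refine ⟨Equiv.swap q r * u, by rw [hxe]; exact hne23, ?_⟩
      ext z
      simp only [Set.mem_setOf_eq, Set.mem_insert_iff, Set.mem_singleton_iff]
      constructor
      · intro hz
        rcases key z hz with rfl | rfl | rfl
        · exact absurd (m1.mp hz) hA1
        · exact Or.inr rfl
        · exact Or.inl hxe.symm
      · rintro (rfl | rfl)
        · exact ⟨hx1, hx2⟩
        · exact m2.mpr hA2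
    · exfalso; simp only [Fin.lt_def] at hA1 hA2 hA3; omega

lemma middles {n : ℕ} {u x w : Pm n} (h1 : BEdge u x) (h2 : BEdge x w) :
    ∃ y, y ≠ x ∧ {z | BEdge u z ∧ BEdge z w} = {x, y} := by
  obtain ⟨a, b, hab, hx, hcu⟩ := bedge_ex h1
  obtain ⟨c, d, hcd, hw, hcx⟩ := bedge_ex h2
  have hw' : w = (Equiv.swap c d * Equiv.swap a b) * u := by rw [hw, hx, mul_assoc]
  by_cases hac : a = c
  · subst hac
    by_cases hbd : b = d
    · subst hbd
      exfalso
      have hwu : w = u := by rw [hw, hx, ← mul_assoc, Equiv.swap_mul_self, one_mul]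
      have l1 := h1.2
      have l2 := h2.2
      rw [hwu] at l2
      omega
    · -- shared point a : letters a, b, d
      have had : a ≠ d := ne_of_lt hcd
      refine tri a b d hab.ne had hbd u w x (Equiv.swap a d * Equiv.swap a b)
        ?_ ?_ ?_ ?_ hw' h1 h2
      · simp only [Equiv.Perm.mul_apply]
        rw [Equiv.swap_apply_left, Equiv.swap_apply_of_ne_of_ne hab.ne' hbd]
      · simp only [Equiv.Perm.mul_apply]
        rw [Equiv.swap_apply_right, Equiv.swap_apply_left]
      · simp only [Equiv.Perm.mul_apply]
        rw [Equiv.swap_apply_of_ne_of_ne (Ne.symm had) (Ne.symm hbd), Equiv.swap_apply_right]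
      · intro z hza hzb hzd
        simp only [Equiv.Perm.mul_apply]
        rw [Equiv.swap_apply_of_ne_of_ne hza hzb, Equiv.swap_apply_of_ne_of_ne hza hzd]
  · by_cases hbc : b = c
    · subst hbc
      -- letters a, d, b (cycle a → d → b → a), σ = swap b d * swap a b
      have had : a ≠ d := ne_of_lt (lt_trans hab hcd)
      refine tri a d b had hab.ne hcd.ne' u w x (Equiv.swap b d * Equiv.swap a b)
        ?_ ?_ ?_ ?_ hw' h1 h2
      · simp only [Equiv.Perm.mul_apply]
        rw [Equiv.swap_apply_left, Equiv.swap_apply_left]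
      · simp only [Equiv.Perm.mul_apply]
        rw [Equiv.swap_apply_of_ne_of_ne (Ne.symm had) (Ne.symm hcd.ne), Equiv.swap_apply_right]
      · simp only [Equiv.Perm.mul_apply]
        rw [Equiv.swap_apply_right, Equiv.swap_apply_of_ne_of_ne hab.ne had]
      · intro z hza hzd hzb
        simp only [Equiv.Perm.mul_apply]
        rw [Equiv.swap_apply_of_ne_of_ne hza hzb, Equiv.swap_apply_of_ne_of_ne hzb hzd]
    · by_cases had : a = d
      · subst had
        -- c < a < b, letters a, b, c, σ = swap c a * swap a b
        have hbc' : b ≠ c := (lt_trans hcd hab).ne'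
        refine tri a b c hab.ne hcd.ne' hbc' u w x
          (Equiv.swap c a * Equiv.swap a b) ?_ ?_ ?_ ?_ hw' h1 h2
        · simp only [Equiv.Perm.mul_apply]
          rw [Equiv.swap_apply_left, Equiv.swap_apply_of_ne_of_ne hbc' hab.ne']
        · simp only [Equiv.Perm.mul_apply]
          rw [Equiv.swap_apply_right, Equiv.swap_apply_right]
        · simp only [Equiv.Perm.mul_apply]
          rw [Equiv.swap_apply_of_ne_of_ne hcd.ne (Ne.symm hbc'), Equiv.swap_apply_left]
        · intro z hza hzb hzc
          simp only [Equiv.Perm.mul_apply]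
          rw [Equiv.swap_apply_of_ne_of_ne hza hzb, Equiv.swap_apply_of_ne_of_ne hzc hza]
      · by_cases hbd : b = d
        · subst hbd
          -- c < b, letters a, c, b, σ = swap c b * swap a b
          refine tri a c b hac hab.ne hcd.ne u w x (Equiv.swap c b * Equiv.swap a b)
            ?_ ?_ ?_ ?_ hw' h1 h2
          · simp only [Equiv.Perm.mul_apply]
            rw [Equiv.swap_apply_left, Equiv.swap_apply_right]
          · simp only [Equiv.Perm.mul_apply]
            rw [Equiv.swap_apply_of_ne_of_ne (Ne.symm hac) hcd.ne, Equiv.swap_apply_left]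
          · simp only [Equiv.Perm.mul_apply]
            rw [Equiv.swap_apply_right, Equiv.swap_apply_of_ne_of_ne hac hab.ne]
          · intro z hza hzc hzb
            simp only [Equiv.Perm.mul_apply]
            rw [Equiv.swap_apply_of_ne_of_ne hza hzb, Equiv.swap_apply_of_ne_of_ne hzc hzb]
        · -- disjoint case
          have hca : c ≠ a := Ne.symm hac
          have hcb : c ≠ b := Ne.symm hbc
          have hda : d ≠ a := Ne.symm had
          have hdb : d ≠ b := Ne.symm hbd
          -- σ values
          have sa : Equiv.swap c d (Equiv.swap a b a) = b := by
            rw [Equiv.swap_apply_left, Equiv.swap_apply_of_ne_of_ne hbc hbd]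
          have sb : Equiv.swap c d (Equiv.swap a b b) = a := by
            rw [Equiv.swap_apply_right, Equiv.swap_apply_of_ne_of_ne hac had]
          have sc : Equiv.swap c d (Equiv.swap a b c) = d := by
            rw [Equiv.swap_apply_of_ne_of_ne hca hcb, Equiv.swap_apply_left]
          have sd : Equiv.swap c d (Equiv.swap a b d) = c := by
            rw [Equiv.swap_apply_of_ne_of_ne hda hdb, Equiv.swap_apply_right]
          have hcomm : Equiv.swap c d * Equiv.swap a b
              = Equiv.swap a b * Equiv.swap c d := by
            ext z
            simp only [Equiv.Perm.mul_apply]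
            rcases eq_or_ne z a with rfl | hza
            · rw [sa, Equiv.swap_apply_of_ne_of_ne hac had, Equiv.swap_apply_left]
            rcases eq_or_ne z b with rfl | hzb
            · rw [sb, Equiv.swap_apply_of_ne_of_ne hbc hbd, Equiv.swap_apply_right]
            rcases eq_or_ne z c with rfl | hzc
            · rw [sc, Equiv.swap_apply_left, Equiv.swap_apply_of_ne_of_ne hda hdb]
            rcases eq_or_ne z d with rfl | hzd
            · rw [sd, Equiv.swap_apply_right, Equiv.swap_apply_of_ne_of_ne hca hcb]
            · rw [Equiv.swap_apply_of_ne_of_ne hza hzb,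
                Equiv.swap_apply_of_ne_of_ne hzc hzd,
                Equiv.swap_apply_of_ne_of_ne hza hzb]
          have hcu2 : u⁻¹ c < u⁻¹ d := by
            have e1 : x⁻¹ c = u⁻¹ c := by
              rw [hx]
              simp [mul_inv_rev, Equiv.swap_inv, Equiv.Perm.mul_apply,
                Equiv.swap_apply_of_ne_of_ne hca hcb]
            have e2 : x⁻¹ d = u⁻¹ d := by
              rw [hx]
              simp [mul_inv_rev, Equiv.swap_inv, Equiv.Perm.mul_apply,
                Equiv.swap_apply_of_ne_of_ne hda hdb]
            rw [← e1, ← e2]; exact hcx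
          refine ⟨Equiv.swap c d * u, ?_, ?_⟩
          · intro hcon
            rw [hx] at hcon
            have h' := Equiv.ext_iff.mp (mul_right_cancel hcon) a
            rw [Equiv.swap_apply_of_ne_of_ne hac had, Equiv.swap_apply_left] at h'
            exact hab.ne h'
          · ext z
            simp only [Set.mem_setOf_eq, Set.mem_insert_iff, Set.mem_singleton_iff]
            constructor
            · rintro ⟨hz1, hz2⟩
              obtain ⟨e, f, hef, hz, -⟩ := bedge_ex hz1
              have hgs : (w * z⁻¹).IsSwap := hz2.1
              have hg : w * z⁻¹ = (Equiv.swap c d * Equiv.swap a b) * Equiv.swap e f := by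
                rw [hw', hz, mul_inv_rev, Equiv.swap_inv]
                group
              have hgapp : ∀ ζ, (w * z⁻¹) ζ
                  = Equiv.swap c d (Equiv.swap a b (Equiv.swap e f ζ)) := by
                intro ζ; rw [hg]; rfl
              -- mixed-pair impossibility
              have hmix : ∀ α γ α' γ', ({α, α'} : Set (Fin n)) = {a, b} →
                  ({γ, γ'} : Set (Fin n)) = {c, d} → Equiv.swap e f = Equiv.swap α γ →
                  False := by
                intro α γ α' γ' hαα hγγ hswap
                have hα : (α = a ∧ α' = b) ∨ (α = b ∧ α' = a) := by
                  have h1 : α ∈ ({a, b} : Set (Fin n)) := by rw [← hαα]; left; rfl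
                  have h2 : α' ∈ ({a, b} : Set (Fin n)) := by rw [← hαα]; right; rfl
                  have h3 : a ∈ ({α, α'} : Set (Fin n)) := by rw [hαα]; left; rfl
                  have h4 : b ∈ ({α, α'} : Set (Fin n)) := by rw [hαα]; right; rfl
                  simp only [Set.mem_insert_iff, Set.mem_singleton_iff] at h1 h2 h3 h4
                  rcases h1 with rfl | rfl
                  · rcases h4 with h4 | rfl
                    · exact absurd h4.symm hab.ne
                    · exact Or.inl ⟨rfl, rfl⟩
                  · rcases h3 with h3 | rfl
                    · exact absurd h3 hab.ne
                    · exact Or.inr ⟨rfl, rfl⟩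
                have hγ : (γ = c ∧ γ' = d) ∨ (γ = d ∧ γ' = c) := by
                  have h1 : γ ∈ ({c, d} : Set (Fin n)) := by rw [← hγγ]; left; rfl
                  have h2 : γ' ∈ ({c, d} : Set (Fin n)) := by rw [← hγγ]; right; rfl
                  have h3 : c ∈ ({γ, γ'} : Set (Fin n)) := by rw [hγγ]; left; rfl
                  have h4 : d ∈ ({γ, γ'} : Set (Fin n)) := by rw [hγγ]; right; rfl
                  simp only [Set.mem_insert_iff, Set.mem_singleton_iff] at h1 h2 h3 h4
                  rcases h1 with rfl | rfl
                  · rcases h4 with h4 | rfl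
                    · exact absurd h4.symm hcd.ne
                    · exact Or.inl ⟨rfl, rfl⟩
                  · rcases h3 with h3 | rfl
                    · exact absurd h3 hcd.ne
                    · exact Or.inr ⟨rfl, rfl⟩
                -- α ∈ {a,b}, γ ∈ {c,d}, α' the partner, γ' the partner
                have hαa : α = a ∨ α = b := by rcases hα with ⟨h, -⟩ | ⟨h, -⟩ <;> [exact Or.inl h; exact Or.inr h]
                have hγc : γ = c ∨ γ = d := by rcases hγ with ⟨h, -⟩ | ⟨h, -⟩ <;> [exact Or.inl h; exact Or.inr h]
                have hασ : Equiv.swap c d (Equiv.swap a b α') = α := by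
                  rcases hα with ⟨rfl, rfl⟩ | ⟨rfl, rfl⟩ <;> [exact sb; exact sa]
                have hγσ : Equiv.swap c d (Equiv.swap a b γ') = γ := by
                  rcases hγ with ⟨rfl, rfl⟩ | ⟨rfl, rfl⟩ <;> [exact sd; exact sc]
                have hαγσ : Equiv.swap c d (Equiv.swap a b γ) = γ' := by
                  rcases hγ with ⟨rfl, rfl⟩ | ⟨rfl, rfl⟩ <;> [exact sc; exact sd]
                -- distinctness facts
                have dαγ : α ≠ γ := by
                  rcases hαa with rfl | rfl <;> rcases hγc with rfl | rfl <;>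
                    [exact hac; exact had; exact hbc; exact hbd]
                have dα'γ : α' ≠ γ := by
                  rcases hα with ⟨-, rfl⟩ | ⟨-, rfl⟩ <;> rcases hγc with rfl | rfl <;>
                    [exact hbc; exact hbd; exact hac; exact had]
                have dα'γ' : α' ≠ γ' := by
                  rcases hα with ⟨-, rfl⟩ | ⟨-, rfl⟩ <;> rcases hγ with ⟨-, rfl⟩ | ⟨-, rfl⟩ <;>
                    [exact hbd; exact hbc; exact had; exact hac]
                have dαα' : α ≠ α' := by
                  rcases hα with ⟨rfl, rfl⟩ | ⟨rfl, rfl⟩ <;> [exact hab.ne; exact hab.ne']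
                have dγγ' : γ ≠ γ' := by
                  rcases hγ with ⟨rfl, rfl⟩ | ⟨rfl, rfl⟩ <;> [exact hcd.ne; exact hcd.ne']
                have dαγ' : α ≠ γ' := by
                  rcases hαa with rfl | rfl <;> rcases hγ with ⟨-, rfl⟩ | ⟨-, rfl⟩ <;>
                    [exact had; exact hac; exact hbd; exact hbc]
                refine not_isSwap_of_three (w * z⁻¹) α' γ' α dα'γ' (Ne.symm dαα')
                  (Ne.symm dαγ') ?_ ?_ ?_ hgs
                · rw [hgapp, hswap, Equiv.swap_apply_of_ne_of_ne dαα'.symm dα'γ, hασ]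
                  exact dαα'
                · rw [hgapp, hswap,
                    Equiv.swap_apply_of_ne_of_ne (Ne.symm dαγ') dγγ'.symm, hγσ]
                  exact dγγ'
                · rw [hgapp, hswap, Equiv.swap_apply_left, hαγσ]
                  exact Ne.symm dαγ'
              -- support restriction
              have hmoves : ∀ ζ, ζ ≠ e → ζ ≠ f → (ζ = a ∨ ζ = b ∨ ζ = c ∨ ζ = d) →
                  (w * z⁻¹) ζ ≠ ζ := by
                intro ζ hζe hζf hζ
                rw [hgapp, Equiv.swap_apply_of_ne_of_ne hζe hζf]
                rcases hζ with rfl | rfl | rfl | rfl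
                · rw [sa]; exact hab.ne'
                · rw [sb]; exact hab.ne
                · rw [sc]; exact hcd.ne'
                · rw [sd]; exact hcd.ne
              have hein : e = a ∨ e = b ∨ e = c ∨ e = d := by
                by_contra hcon
                push_neg at hcon
                obtain ⟨hea, heb, hec, hed⟩ := hcon
                have hge : (w * z⁻¹) e ≠ e := by
                  rw [hgapp, Equiv.swap_apply_left]
                  intro hcc
                  rcases eq_or_ne f a with rfl | hfa
                  · rw [sa] at hcc; exact heb hcc.symm
                  rcases eq_or_ne f b with rfl | hfb
                  · rw [sb] at hcc; exact hea hcc.symm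
                  rcases eq_or_ne f c with rfl | hfc
                  · rw [sc] at hcc; exact hed hcc.symm
                  rcases eq_or_ne f d with rfl | hfd
                  · rw [sd] at hcc; exact hec hcc.symm
                  · rw [Equiv.swap_apply_of_ne_of_ne hfa hfb,
                      Equiv.swap_apply_of_ne_of_ne hfc hfd] at hcc
                    exact hef.ne' hcc
                by_cases hfab : f = a ∨ f = b
                · refine not_isSwap_of_three (w * z⁻¹) e c d hec hed hcd.ne hge
                    (hmoves c (Ne.symm hec) ?_ (Or.inr (Or.inr (Or.inl rfl))))
                    (hmoves d (Ne.symm hed) ?_ (Or.inr (Or.inr (Or.inr rfl)))) hgs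
                  · rcases hfab with rfl | rfl <;> [exact hca; exact hcb]
                  · rcases hfab with rfl | rfl <;> [exact hda; exact hdb]
                · push_neg at hfab
                  exact not_isSwap_of_three (w * z⁻¹) e a b hea heb hab.ne hge
                    (hmoves a (Ne.symm hea) (Ne.symm hfab.1) (Or.inl rfl))
                    (hmoves b (Ne.symm heb) (Ne.symm hfab.2) (Or.inr (Or.inl rfl))) hgs
              have hfin : f = a ∨ f = b ∨ f = c ∨ f = d := by
                by_contra hcon
                push_neg at hcon
                obtain ⟨hfa, hfb, hfc, hfd⟩ := hcon
                have hgf : (w * z⁻¹) f ≠ f := by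
                  rw [hgapp, Equiv.swap_apply_right]
                  rcases hein with rfl | rfl | rfl | rfl
                  · rw [sa]; exact Ne.symm hfb
                  · rw [sb]; exact Ne.symm hfa
                  · rw [sc]; exact Ne.symm hfd
                  · rw [sd]; exact Ne.symm hfc
                by_cases heab : e = a ∨ e = b
                · refine not_isSwap_of_three (w * z⁻¹) f c d hfc hfd hcd.ne hgf
                    (hmoves c ?_ (Ne.symm hfc) (Or.inr (Or.inr (Or.inl rfl))))
                    (hmoves d ?_ (Ne.symm hfd) (Or.inr (Or.inr (Or.inr rfl)))) hgs
                  · rcases heab with rfl | rfl <;> [exact hca; exact hcb]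
                  · rcases heab with rfl | rfl <;> [exact hda; exact hdb]
                · push_neg at heab
                  exact not_isSwap_of_three (w * z⁻¹) f a b hfa hfb hab.ne hgf
                    (hmoves a (Ne.symm heab.1) (Ne.symm hfa) (Or.inl rfl))
                    (hmoves b (Ne.symm heab.2) (Ne.symm hfb) (Or.inr (Or.inl rfl))) hgs
              rcases hein with he | he | he | he <;>
                rcases hfin with hf | hf | hf | hf <;> rw [he, hf] at hz hef
              · exact absurd hef (lt_irrefl a)
              · exact Or.inl (hz.trans hx.symm)
              · exact (hmix a c b d rfl rfl (by rw [he, hf])).elim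
              · exact (hmix a d b c rfl (Set.pair_comm d c) (by rw [he, hf])).elim
              · exact absurd hef (asymm hab)
              · exact absurd hef (lt_irrefl b)
              · exact (hmix b c a d (Set.pair_comm b a) rfl (by rw [he, hf])).elim
              · exact (hmix b d a c (Set.pair_comm b a) (Set.pair_comm d c)
                  (by rw [he, hf])).elim
              · exact (hmix a c b d rfl rfl
                  (by rw [he, hf]; exact Equiv.swap_comm c a)).elim
              · exact (hmix b c a d (Set.pair_comm b a) rfl
                  (by rw [he, hf]; exact Equiv.swap_comm c b)).elim
              · exact absurd hef (lt_irrefl c)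
              · exact Or.inr hz
              · exact (hmix a d b c rfl (Set.pair_comm d c)
                  (by rw [he, hf]; exact Equiv.swap_comm d a)).elim
              · exact (hmix b d a c (Set.pair_comm b a) (Set.pair_comm d c)
                  (by rw [he, hf]; exact Equiv.swap_comm d b)).elim
              · exact absurd hef (asymm hcd)
              · exact absurd hef (lt_irrefl d)
            · rintro (rfl | rfl)
              · exact ⟨h1, h2⟩
              · constructor
                · exact (bedge_swap_iff c d hcd.ne u).mpr (Or.inl ⟨hcd, hcu2⟩)
                · have hwy : w = Equiv.swap a b * (Equiv.swap c d * u) := by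
                    rw [hw', hcomm, mul_assoc]
                  rw [hwy]
                  refine (bedge_swap_iff a b hab.ne (Equiv.swap c d * u)).mpr
                    (Or.inl ⟨hab, ?_⟩)
                  have e1 : (Equiv.swap c d * u)⁻¹ a = u⁻¹ a := by
                    simp [mul_inv_rev, Equiv.swap_inv, Equiv.Perm.mul_apply,
                      Equiv.swap_apply_of_ne_of_ne hac had]
                  have e2 : (Equiv.swap c d * u)⁻¹ b = u⁻¹ b := by
                    simp [mul_inv_rev, Equiv.swap_inv, Equiv.Perm.mul_apply,
                      Equiv.swap_apply_of_ne_of_ne hbc hbd]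
                  rw [e1, e2]; exact hcu

section Glue

variable {n h : ℕ} {u v : Pm n} {F : Set (ℕ → Pm n)}

lemma F_isPath (hF : IsFlipclass n h u v F) {p : ℕ → Pm n} (hp : p ∈ F) :
    IsPath n h u v p := by
  obtain ⟨p₀, hp₀, rfl⟩ := hF
  simp only [Set.mem_setOf_eq] at hp
  rcases hp.cases_tail with rfl | ⟨c, -, hstep⟩
  · exact hp₀
  · exact hstep.2.1

lemma F_closed (hF : IsFlipclass n h u v F) {p q : ℕ → Pm n} (hp : p ∈ F)
    (hs : FlipStep n h u v p q) : q ∈ F := by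
  obtain ⟨p₀, hp₀, rfl⟩ := hF
  simp only [Set.mem_setOf_eq] at hp ⊢
  exact hp.tail hs

lemma F_isTSPath (hF : IsFlipclass n h u v F) {p : ℕ → Pm n} (hp : p ∈ F) :
    IsTSPath n h F u v p := by
  have hpath := F_isPath hF hp
  exact ⟨hpath.1, hpath.2.1, fun i hi => ⟨hi, rfl, p, hp, rfl, rfl⟩⟩

lemma TSPath_isPath (hF : IsFlipclass n h u v F) {y : ℕ → Pm n}
    (hy : IsTSPath n h F u v y) : IsPath n h u v y := by
  refine ⟨hy.1, hy.2.1, fun i hi => ?_⟩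
  obtain ⟨-, -, p, hp, h1, h2⟩ := hy.2.2 i hi
  have hpath := F_isPath hF hp
  have hE := hpath.2.2 i hi
  rwa [h1, h2] at hE

lemma tse_bedge (hF : IsFlipclass n h u v F) {x y : Pm n × ℕ}
    (hxy : TSE n h F x y) : BEdge x.1 y.1 := by
  obtain ⟨hlt, -, p, hp, e1, e2⟩ := hxy
  have hpath := F_isPath hF hp
  have hE := hpath.2.2 x.2 hlt
  rwa [e1, e2] at hE

lemma reach_time {x y : Pm n × ℕ} (hxy : Relation.ReflTransGen (TSE n h F) x y) :
    x.2 ≤ y.2 ∧ (x.2 = y.2 → x = y) := by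
  induction hxy with
  | refl => exact ⟨le_refl _, fun _ => rfl⟩
  | @tail b c hab hbc ih =>
    have h1 := hbc.2.1
    have h2 := ih.1
    exact ⟨by omega, fun hxc => by omega⟩

lemma reach_step1 {x y : Pm n × ℕ} (hxy : Relation.ReflTransGen (TSE n h F) x y)
    (ht : y.2 = x.2 + 1) : TSE n h F x y := by
  rcases hxy.cases_head with rfl | ⟨c, hxc, hcy⟩
  · omega
  · have hc := reach_time hcy
    have h1 := hxc.2.1
    have hcyeq : c = y := hc.2 (by omega)
    rwa [hcyeq] at hxc

lemma reach_step2 {x y : Pm n × ℕ} (hxy : Relation.ReflTransGen (TSE n h F) x y)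
    (ht : y.2 = x.2 + 2) : ∃ c, TSE n h F x c ∧ TSE n h F c y := by
  rcases hxy.cases_head with rfl | ⟨c, hxc, hcy⟩
  · omega
  · exact ⟨c, hxc, reach_step1 hcy (by have := hxc.2.1; omega)⟩

lemma flipAt_symm {i : ℕ} {p q : ℕ → Pm n} (hf : FlipAt h i p q) : FlipAt h i q p :=
  ⟨hf.1, hf.2.1, (hf.2.2.1).symm, fun j hj => (hf.2.2.2 j hj).symm⟩

end Glue

/-- Lemma (effectiveness criterion): every path of length `h` from `(u,0)` to `(v,h)` in
`TS_F` is effective (i.e. the natural injection `i_{TS_F}` is bijective) iff every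
nonempty interval `[(a,i),(b,i+2)]` in the poset induced by `TS_F` is a diamond (exactly
two elements strictly between) and the flip operators thereby defined act transitively on
the set of such paths. -/
theorem ts_effective_iff (n h : ℕ) (u v : Pm n) (huv : bruhatLT u v)
    (F : Set (ℕ → Pm n)) (hF : IsFlipclass n h u v F) :
    (∀ y, IsTSPath n h F u v y → y ∈ F) ↔
    ((∀ (a b : Pm n) (i : ℕ), (a, i) ∈ TSV n h F → (b, i + 2) ∈ TSV n h F →
        Relation.ReflTransGen (TSE n h F) (a, i) (b, i + 2) →
        Set.ncard {z : Pm n × ℕ |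
          Relation.ReflTransGen (TSE n h F) (a, i) z ∧
          Relation.ReflTransGen (TSE n h F) z (b, i + 2) ∧
          z ≠ (a, i) ∧ z ≠ (b, i + 2)} = 2) ∧
      ∀ y y', IsTSPath n h F u v y → IsTSPath n h F u v y' →
        Relation.ReflTransGen
          (fun z z' => IsTSPath n h F u v z ∧ IsTSPath n h F u v z' ∧ ∃ i, FlipAt h i z z')
          y y') := by
    classical
  obtain ⟨p₀, hp₀path, hFdef⟩ := id hF
  have hp₀F : p₀ ∈ F := by rw [hFdef]; exact Relation.ReflTransGen.refl
  constructor
  · intro heff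
    constructor
    · -- diamond condition
      intro a b i hai hbi hreach
      obtain ⟨⟨c1, c2⟩, hc1, hc2⟩ := reach_step2 hreach rfl
      have hct : c2 = i + 1 := hc1.2.1
      subst hct
      have hBac : BEdge a c1 := tse_bedge hF hc1
      have hBcb : BEdge c1 b := tse_bedge hF hc2
      simp only [TSV, Set.mem_setOf_eq] at hai hbi
      have hi2 : i + 2 ≤ h := hbi.1
      obtain ⟨-, p, hpF, hpa⟩ := hai
      obtain ⟨-, q, hqF, hqb⟩ := hbi
      set r : ℕ → Pm n := fun j => if j ≤ i then p j else if j = i + 1 then c1 else q j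
        with hrdef
      have hr1 : ∀ j, j ≤ i → r j = p j := fun j hj => by
        simp only [hrdef]; rw [if_pos hj]
      have hr2 : r (i + 1) = c1 := by
        simp only [hrdef]; rw [if_neg (by omega)]; simp
      have hr3 : ∀ j, i + 2 ≤ j → r j = q j := fun j hj => by
        simp only [hrdef]; rw [if_neg (by omega), if_neg (by omega)]
      have hppath := F_isPath hF hpF
      have hqpath := F_isPath hF hqF
      have hrTS : IsTSPath n h F u v r := by
        refine ⟨by rw [hr1 0 (by omega)]; exact hppath.1,
          fun j hj => by rw [hr3 j (by omega)]; exact hqpath.2.1 j hj,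
          fun j hj => ?_⟩
        rcases lt_trichotomy j i with hji | hjeq | hji
        · refine ⟨hj, rfl, p, hpF, ?_, ?_⟩
          · rw [hr1 j (by omega)]
          · rw [hr1 (j + 1) (by omega)]
        · have e1 : r i = a := by rw [hr1 i (le_refl i), hpa]
          rw [hjeq, e1, hr2]
          exact hc1
        · rcases Nat.lt_or_ge j (i + 2) with hj2 | hj2
          · have hjeq : j = i + 1 := by omega
            subst hjeq
            rw [hr2, hr3 (i + 2) (le_refl _), hqb]
            exact hc2
          · refine ⟨hj, rfl, q, hqF, ?_, ?_⟩
            · rw [hr3 j hj2]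
            · rw [hr3 (j + 1) (by omega)]
      have hrF : r ∈ F := heff r hrTS
      have hrpath := F_isPath hF hrF
      obtain ⟨y', hy'ne, hset⟩ := middles hBac hBcb
      set r' : ℕ → Pm n := fun j => if j = i + 1 then y' else r j with hr'def
      have hr'1 : ∀ j, j ≠ i + 1 → r' j = r j := fun j hj => by
        simp only [hr'def]; rw [if_neg hj]
      have hr'2 : r' (i + 1) = y' := by simp [hr'def]
      have hy'mid : BEdge a y' ∧ BEdge y' b := by
        have hm : y' ∈ {z | BEdge a z ∧ BEdge z b} := by rw [hset]; right; rfl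
        exact hm
      have hr'path : IsPath n h u v r' := by
        refine ⟨by rw [hr'1 0 (by omega)]; exact hrpath.1,
          fun j hj => by rw [hr'1 j (by omega)]; exact hrpath.2.1 j hj, fun j hj => ?_⟩
        rcases lt_trichotomy j i with hji | hjeq | hji
        · rw [hr'1 j (by omega), hr'1 (j + 1) (by omega)]
          exact hrpath.2.2 j hj
        · rw [hjeq, hr'1 i (by omega), hr'2, hr1 i (le_refl i), hpa]
          exact hy'mid.1
        · rcases Nat.lt_or_ge j (i + 2) with hj2 | hj2
          · have hjeq : j = i + 1 := by omega
            subst hjeq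
            rw [hr'2, hr'1 (i + 2) (by omega), hr3 (i + 2) (le_refl _), hqb]
            exact hy'mid.2
          · rw [hr'1 j (by omega), hr'1 (j + 1) (by omega)]
            exact hrpath.2.2 j hj
      have hflip : FlipAt h (i + 1) r r' := by
        refine ⟨by omega, by omega, ?_, fun j hj => (hr'1 j hj).symm⟩
        rw [hr2, hr'2]
        exact Ne.symm hy'ne
      have hr'F : r' ∈ F := F_closed hF hrF ⟨hrpath, hr'path, i + 1, hflip⟩
      have hr'i : r' i = a := by rw [hr'1 i (by omega), hr1 i (le_refl i), hpa]
      have hr'i2 : r' (i + 2) = b := by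
        rw [hr'1 (i + 2) (by omega), hr3 (i + 2) (le_refl _), hqb]
      have hTSy1 : TSE n h F (a, i) (y', i + 1) := ⟨by omega, rfl, r', hr'F, hr'i, hr'2⟩
      have hTSy2 : TSE n h F (y', i + 1) (b, i + 2) := ⟨by omega, rfl, r', hr'F, hr'2, hr'i2⟩
      have hseteq : {z : Pm n × ℕ |
          Relation.ReflTransGen (TSE n h F) (a, i) z ∧
          Relation.ReflTransGen (TSE n h F) z (b, i + 2) ∧
          z ≠ (a, i) ∧ z ≠ (b, i + 2)} = {(c1, i + 1), (y', i + 1)} := by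
        ext z
        simp only [Set.mem_setOf_eq, Set.mem_insert_iff, Set.mem_singleton_iff]
        constructor
        · rintro ⟨hz1, hz2, hz3, hz4⟩
          have t1 := reach_time hz1
          have t2 := reach_time hz2
          have hi_le : i ≤ z.2 := t1.1
          have hle2 : z.2 ≤ i + 2 := t2.1
          have hne1 : z.2 ≠ i := fun hh => hz3 (t1.2 hh.symm).symm
          have hne2 : z.2 ≠ i + 2 := fun hh => hz4 (t2.2 hh)
          have hzt : z.2 = i + 1 := by omega
          have s1 : TSE n h F (a, i) z := reach_step1 hz1 (by simpa using hzt)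
          have s2 : TSE n h F z (b, i + 2) := reach_step1 hz2 (by simp; omega)
          have hmem : z.1 ∈ {z' | BEdge a z' ∧ BEdge z' b} :=
            ⟨tse_bedge hF s1, tse_bedge hF s2⟩
          rw [hset] at hmem
          simp only [Set.mem_insert_iff, Set.mem_singleton_iff] at hmem
          rcases hmem with h' | h'
          · left; exact Prod.ext h' hzt
          · right; exact Prod.ext h' hzt
        · rintro (rfl | rfl)
          · refine ⟨Relation.ReflTransGen.single hc1, Relation.ReflTransGen.single hc2,
              ?_, ?_⟩
            · intro hh; have := congrArg Prod.snd hh; simp at this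
            · intro hh; have := congrArg Prod.snd hh; simp at this
          · refine ⟨Relation.ReflTransGen.single hTSy1, Relation.ReflTransGen.single hTSy2,
              ?_, ?_⟩
            · intro hh; have := congrArg Prod.snd hh; simp at this
            · intro hh; have := congrArg Prod.snd hh; simp at this
      rw [hseteq]
      refine Set.ncard_pair ?_
      intro hh
      exact (Ne.symm hy'ne) (congrArg Prod.fst hh)
    · -- transitivity
      intro y y' hy hy'
      have hyF := heff y hy
      have hy'F := heff y' hy'
      have conv : ∀ q', q' ∈ F → Relation.ReflTransGen
          (fun z z' => IsTSPath n h F u v z ∧ IsTSPath n h F u v z' ∧ ∃ i, FlipAt h i z z')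
          p₀ q' := by
        intro q' hq'
        rw [hFdef] at hq'
        simp only [Set.mem_setOf_eq] at hq'
        induction hq' with
        | refl => exact Relation.ReflTransGen.refl
        | @tail b c hab hbc ih =>
          have hbF : b ∈ F := by rw [hFdef]; exact hab
          have hcF : c ∈ F := by rw [hFdef]; exact hab.tail hbc
          exact ih.tail ⟨F_isTSPath hF hbF, F_isTSPath hF hcF, hbc.2.2⟩
      have hsym : Symmetric (fun z z' => IsTSPath n h F u v z ∧ IsTSPath n h F u v z' ∧
          ∃ i, FlipAt h i z z') := by
        rintro z z' ⟨h1, h2, i, hf⟩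
        exact ⟨h2, h1, i, flipAt_symm hf⟩
      exact ((@Relation.ReflTransGen.stdSymm _ _ ⟨fun _ _ hh => hsym hh⟩).symm _ _ (conv y hyF)).trans (conv y' hy'F)
  · rintro ⟨-, htrans⟩ y hy
    have hchain := htrans p₀ y (F_isTSPath hF hp₀F) hy
    clear hy
    induction hchain with
    | refl => exact hp₀F
    | @tail b c hab hbc ih =>
      exact F_closed hF ih ⟨F_isPath hF ih, TSPath_isPath hF hbc.2.1, hbc.2.2⟩
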